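/- For every n ≥ 2, the incidence poset P_n of the complete graph on n vertices has boolean dimension at most 4. -/

import Mathlib

/-- `L` is a realizer of the order `le`: a family of linear extensions of `le`
whose intersection is `le`. -/
def IsRealizer {X : Type*} (le : X → X → Prop) {d : ℕ} (L : Fin d → X → X → Prop) : Prop :=
  (∀ i, IsLinearOrder X (L i)) ∧ (∀ (i) (x y : X), le x y → L i x y) ∧
    (∀ x y : X, le x y ↔ ∀ i, L i x y)

/-- The (Dushnik–Miller) dimension of a poset: the least size of a realizer. -/
noncomputable def orderDim (X : Type*) [PartialOrder X] : ℕ :=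
  sInf {d : ℕ | ∃ L : Fin d → X → X → Prop, IsRealizer (· ≤ ·) L}

/-- `L` together with the boolean function `φ` is a boolean realizer of `le`. -/
def IsBooleanRealizer {X : Type*} (le : X → X → Prop) {d : ℕ}
    (L : Fin d → X → X → Prop) (φ : (Fin d → Prop) → Prop) : Prop :=
  (∀ i, IsLinearOrder X (L i)) ∧ ∀ x y : X, le x y ↔ φ (fun i => L i x y)

/-- Boolean dimension of a relation. -/
noncomputable def booleanDimRel {X : Type*} (le : X → X → Prop) : ℕ :=
  sInf {d : ℕ | ∃ (L : Fin d → X → X → Prop) (φ : (Fin d → Prop) → Prop),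
    IsBooleanRealizer le L φ}

/-- Boolean dimension of a poset. -/
noncomputable def booleanDim (X : Type*) [PartialOrder X] : ℕ :=
  booleanDimRel ((· ≤ ·) : X → X → Prop)

/-- A partial linear extension of `le`: a linear order on a subset of `X`
extending the restriction of `le` to that subset. -/
structure PLE {X : Type*} (le : X → X → Prop) where
  dom : Set X
  rel : X → X → Prop
  mem_left : ∀ x y, rel x y → x ∈ dom
  mem_right : ∀ x y, rel x y → y ∈ dom
  refl : ∀ x ∈ dom, rel x x
  antisymm : ∀ x y, rel x y → rel y x → x = y
  trans : ∀ x y z, rel x y → rel y z → rel x z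
  total : ∀ x ∈ dom, ∀ y ∈ dom, rel x y ∨ rel y x
  le_imp : ∀ x ∈ dom, ∀ y ∈ dom, le x y → rel x y

/-- A family of partial linear extensions is a local realizer of `le`:
`x ≤ y` iff no member reverses the pair strictly. -/
def IsLocalRealizer {X : Type*} {le : X → X → Prop} {ι : Type*} (L : ι → PLE le) : Prop :=
  ∀ x y : X, le x y ↔ ∀ i, ¬ ((L i).rel y x ∧ y ≠ x)

/-- Every element of `X` occurs in the domain of at most `d` members of the family. -/
def WidthAtMost {X : Type*} {le : X → X → Prop} {ι : Type*} (L : ι → PLE le) (d : ℕ) : Prop :=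
  ∀ x : X, ({i : ι | x ∈ (L i).dom}).ncard ≤ d

/-- Local dimension of a poset: the least width of a local realizer. -/
noncomputable def localDim (X : Type*) [PartialOrder X] : ℕ :=
  sInf {d : ℕ | ∃ (t : ℕ) (L : Fin t → PLE ((· ≤ ·) : X → X → Prop)),
    IsLocalRealizer L ∧ WidthAtMost L d}

/-- The incidence poset `P_n` of the complete graph `K_n` as a type:
vertices (`inl`) and 2-element edge sets (`inr`). -/
def IncPoset (n : ℕ) : Type := Fin n ⊕ {s : Finset (Fin n) // s.card = 2}

/-- Underlying order of the incidence poset: `v < e` iff `v ∈ e`. -/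
def incLE (n : ℕ) : IncPoset n → IncPoset n → Prop
  | Sum.inl v, Sum.inl w => v = w
  | Sum.inl v, Sum.inr e => v ∈ e.1
  | Sum.inr e, Sum.inr f => e = f
  | Sum.inr _, Sum.inl _ => False

instance (n : ℕ) : PartialOrder (IncPoset n) where
  le := incLE n
  le_refl x := by rcases x with v | e <;> simp [incLE]
  le_trans x y z hxy hyz := by
    rcases x with v | e <;> rcases y with w | f <;> rcases z with u | g <;>
      simp_all [incLE]
  le_antisymm x y hxy hyx := by
    rcases x with v | e <;> rcases y with w | f <;> simp_all [incLE] <;> rfl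

instance (n : ℕ) : Fintype (IncPoset n) :=
  inferInstanceAs (Fintype (Fin n ⊕ {s : Finset (Fin n) // s.card = 2}))

namespace BD

variable (n : ℕ)

abbrev Edge (n : ℕ) := {s : Finset (Fin n) // s.card = 2}

lemma edge_nonempty (e : Edge n) : e.1.Nonempty :=
  Finset.card_pos.mp (by rw [e.2]; omega)

noncomputable def τ (e : Edge n) : ℤ := ((Fintype.equivFin (Edge n)) e : ℤ)

lemma τ_inj : Function.Injective (τ n) := by
  intro e f h
  have : ((Fintype.equivFin (Edge n)) e : Fin _) = (Fintype.equivFin (Edge n)) f := by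
    unfold τ at h
    exact Fin.ext (by exact_mod_cast h)
  exact (Fintype.equivFin (Edge n)).injective this

def mn (e : Edge n) : Fin n := e.1.min' (edge_nonempty n e)
def mx (e : Edge n) : Fin n := e.1.max' (edge_nonempty n e)

lemma mn_lt_mx (e : Edge n) : mn n e < mx n e :=
  Finset.min'_lt_max'_of_card e.1 (by rw [e.2]; omega)

lemma mem_iff (e : Edge n) (v : Fin n) : v ∈ e.1 ↔ v = mn n e ∨ v = mx n e := by
  have hmn : mn n e ∈ e.1 := Finset.min'_mem _ _
  have hmx : mx n e ∈ e.1 := Finset.max'_mem _ _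
  have hne : mn n e ≠ mx n e := ne_of_lt (mn_lt_mx n e)
  obtain ⟨a, b, hab, he⟩ := Finset.card_eq_two.mp e.2
  simp only [he, Finset.mem_insert, Finset.mem_singleton] at hmn hmx ⊢
  rcases hmn with h1 | h1 <;> rcases hmx with h2 | h2 <;>
    first
    | (exfalso; rw [h1, h2] at hne; exact hne rfl)
    | (constructor
       · rintro (rfl | rfl) <;> tauto
       · rintro (rfl | rfl) <;> tauto)

noncomputable def key : Fin 4 → IncPoset n → Lex (ℤ × Lex (ℤ × ℤ))
  | 0, Sum.inl v => toLex ((v : ℤ), toLex (0, 0))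
  | 0, Sum.inr e => toLex ((mn n e : ℤ), toLex (1, τ n e))
  | 1, Sum.inl v => toLex (-(v : ℤ), toLex (0, 0))
  | 1, Sum.inr e => toLex (-(mn n e : ℤ), toLex (1, -(τ n e)))
  | 2, Sum.inl v => toLex ((v : ℤ), toLex (0, 0))
  | 2, Sum.inr e => toLex ((mx n e : ℤ), toLex (1, τ n e))
  | 3, Sum.inl v => toLex (-(v : ℤ), toLex (0, 0))
  | 3, Sum.inr e => toLex (-(mx n e : ℤ), toLex (1, -(τ n e)))

lemma key_inj (i : Fin 4) : Function.Injective (key n i) := by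
  intro x y h
  fin_cases i <;>
    rcases x with v | e <;> rcases y with w | f <;>
    simp only [key, EmbeddingLike.apply_eq_iff_eq, Prod.mk.injEq] at h <;>
    obtain ⟨h1, h2, h3⟩ := h <;>
    first
    | (exfalso; omega)
    | exact congrArg Sum.inl (Fin.ext (by omega))
    | exact congrArg Sum.inr (τ_inj n (by omega))

noncomputable def L (i : Fin 4) (x y : IncPoset n) : Prop := key n i x ≤ key n i y

lemma L_lin (i : Fin 4) : IsLinearOrder (IncPoset n) (L n i) :=
  { refl := fun _ => le_refl _, trans := fun _ _ _ => le_trans,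
    antisymm := fun _ _ h h' => key_inj n i (le_antisymm h h'),
    total := fun _ _ => le_total _ _ }

def φ (b : Fin 4 → Prop) : Prop := b 1 ∧ b 2 ∧ (b 0 ∨ b 3)

lemma lex_le (a b : ℤ) (p q : Lex (ℤ × ℤ)) :
    toLex (a, p) ≤ toLex (b, q) ↔ a < b ∨ a = b ∧ p ≤ q := Prod.Lex.le_iff

lemma main_iff (x y : IncPoset n) : incLE n x y ↔ φ (fun i => L n i x y) := by
  have hlex : ∀ (a b : ℤ) (p q : Lex (ℤ × ℤ)),
      (toLex (a, p) ≤ toLex (b, q)) ↔ (a < b ∨ a = b ∧ p ≤ q) := fun a b p q => Prod.Lex.le_iff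
  have hlex2 : ∀ (a b c d : ℤ),
      ((toLex (a, b) : Lex (ℤ × ℤ)) ≤ toLex (c, d)) ↔ (a < c ∨ a = c ∧ b ≤ d) :=
    fun a b c d => Prod.Lex.le_iff
  rcases x with v | e <;> rcases y with w | f
  · -- vertex, vertex
    simp only [incLE, φ, L, key, hlex, hlex2]
    constructor
    · rintro rfl; simp
    · rintro ⟨h1, h2, _⟩
      have : (v : ℤ) = w := by omega
      exact Fin.ext (by exact_mod_cast this)
  · -- vertex, edge
    simp only [incLE, φ, L, key, hlex, hlex2, mem_iff]
    have h01 : (0:ℤ) < 1 := one_pos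
    constructor
    · rintro (rfl | rfl)
      · refine ⟨?_, ?_, Or.inl ?_⟩ <;> [right; left; right] <;>
          first
          | (exact ⟨rfl, by left; exact h01⟩)
          | (have := mn_lt_mx n f; exact_mod_cast by
              have : (mn n f : ℤ) < (mx n f : ℤ) := by exact_mod_cast this
              omega)
      · refine ⟨?_, ?_, Or.inr ?_⟩
        · left
          have := mn_lt_mx n f
          have : (mn n f : ℤ) < (mx n f : ℤ) := by exact_mod_cast this
          omega
        · right; exact ⟨rfl, by left; exact h01⟩
        · right; exact ⟨rfl, by left; exact h01⟩
    · rintro ⟨h1, h2, h3 | h3⟩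
      · left
        have : (v : ℤ) = (mn n f : ℤ) := by
          rcases h1 with h | ⟨h, _⟩ <;> rcases h3 with h' | ⟨h', h''⟩ <;>
            first
            | omega
            | (rcases h'' with h'' | ⟨h'', _⟩ <;> omega)
        exact Fin.ext (by exact_mod_cast this)
      · right
        have : (v : ℤ) = (mx n f : ℤ) := by
          rcases h2 with h | ⟨h, _⟩ <;> rcases h3 with h' | ⟨h', h''⟩ <;>
            first
            | omega
            | (rcases h'' with h'' | ⟨h'', _⟩ <;> omega)
        exact Fin.ext (by exact_mod_cast this)
  · -- edge, vertex
    simp only [incLE, φ, L, key, hlex, hlex2]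
    constructor
    · exact False.elim
    · rintro ⟨h1, h2, _⟩
      have hmm := mn_lt_mx n e
      have hmm' : (mn n e : ℤ) < (mx n e : ℤ) := by exact_mod_cast hmm
      rcases h1 with h | ⟨h, h' | ⟨h', _⟩⟩ <;> rcases h2 with g | ⟨g, g' | ⟨g', _⟩⟩ <;> omega
  · -- edge, edge
    simp only [incLE, φ, L, key, hlex, hlex2]
    constructor
    · rintro rfl; simp
    · rintro ⟨h1, h2, h3 | h3⟩
      · apply τ_inj n
        have : τ n e = τ n f := by
          rcases h1 with h | ⟨h, h' | ⟨h', h''⟩⟩ <;> rcases h3 with g | ⟨g, g' | ⟨g', g''⟩⟩ <;> omega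
        exact this
      · apply τ_inj n
        rcases h2 with h | ⟨h, h' | ⟨h', h''⟩⟩ <;> rcases h3 with g | ⟨g, g' | ⟨g', g''⟩⟩ <;> omega

end BD


/-- For every `n ≥ 2`, the incidence poset `P_n` of the complete graph
on `n` vertices has boolean dimension at most `4`. -/
theorem boolean_dim_incidence_poset (n : ℕ) (hn : 2 ≤ n) :
    booleanDim (IncPoset n) ≤ 4 := by
  apply Nat.sInf_le
  exact ⟨BD.L n, BD.φ, BD.L_lin n, fun x y => BD.main_iff n x y⟩
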